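/- The function x ↦ sin x · S / (S + exp(cos x / τ)) is monotonically nondecreasing on the interval [0, π/2]. -/
import Mathlib

/-- The function `x ↦ sin x · S / (S + exp(cos x / τ))` is monotonically
nondecreasing on `[0, π/2]`. -/
theorem derivFactor_monotoneOn (τ S : ℝ) (hτ : 0 < τ) (hS : 0 < S) :
    MonotoneOn (fun x : ℝ => Real.sin x * (S / (S + Real.exp (Real.cos x / τ))))
      (Set.Icc 0 (Real.pi / 2)) := by
  have hsub : Set.Icc (0:ℝ) (Real.pi / 2) ⊆ Set.Icc (-(Real.pi / 2)) (Real.pi / 2) := by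
    apply Set.Icc_subset_Icc_left
    linarith [Real.pi_pos]
  have hsub2 : Set.Icc (0:ℝ) (Real.pi / 2) ⊆ Set.Icc 0 Real.pi := by
    apply Set.Icc_subset_Icc_right
    linarith [Real.pi_pos]
  intro x hx y hy hxy
  have hsin : Real.sin x ≤ Real.sin y :=
    (Real.strictMonoOn_sin.monotoneOn) (hsub hx) (hsub hy) hxy
  have hc : Real.cos y ≤ Real.cos x :=
    Real.strictAntiOn_cos.antitoneOn (hsub2 hx) (hsub2 hy) hxy
  have he : Real.exp (Real.cos y / τ) ≤ Real.exp (Real.cos x / τ) :=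
    Real.exp_le_exp.mpr (div_le_div_of_nonneg_right hc hτ.le)
  have hpos : 0 < S + Real.exp (Real.cos y / τ) := by positivity
  have hfrac : S / (S + Real.exp (Real.cos x / τ)) ≤ S / (S + Real.exp (Real.cos y / τ)) :=
    div_le_div_of_nonneg_left hS.le hpos (by linarith)
  have hsxn : 0 ≤ Real.sin x := Real.sin_nonneg_of_mem_Icc (hsub2 hx)
  have hfn : 0 ≤ S / (S + Real.exp (Real.cos x / τ)) := by positivity
  exact mul_le_mul hsin hfrac hfn (hsxn.trans hsin)
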